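/- arXiv:1512.01096 — 2 statements merged into one kernel-verified Lean document; each statement's English description precedes it below -/
import Mathlib

section
/- In the line graph of the wheel graph W_{n+1} (n ≥ 5), the n vertices corresponding to spoke edges form a clique and each has degree n+1, while each of the n vertices corresponding to rim edges has degree 4; consequently cn(L(W_{n+1})) = n and cn^c(L(W_{n+1})) = n^2. -/
open Finset

/-- The number of vertices of `G` having degree `d`. -/
def degMult {V : Type*} (G : SimpleGraph V) [Fintype V] [DecidableRel G.Adj] (d : ℕ) : ℕ :=
  (Finset.univ.filter fun v => G.degree v = d).card

/-- The curling number of a graph: the maximum multiplicity in its degree sequence. -/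
def graphCn {V : Type*} (G : SimpleGraph V) [Fintype V] [DecidableRel G.Adj] : ℕ :=
  (Finset.univ.image (fun v => G.degree v)).sup (degMult G)

/-- The compound curling number of a graph: the product of the multiplicities of the
distinct degree values. -/
def graphCnc {V : Type*} (G : SimpleGraph V) [Fintype V] [DecidableRel G.Adj] : ℕ :=
  ∏ d ∈ Finset.univ.image (fun v => G.degree v), degMult G d

instance {V : Type*} (G : SimpleGraph V) [Fintype V] [DecidableEq V] [DecidableRel G.Adj] :
    DecidableRel G.lineGraph.Adj := fun _ _ =>
  decidable_of_iff' _ SimpleGraph.lineGraph_adj_iff_exists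

/-- Generating relation of the wheel graph `W_{n+1} = C_n + K_1`: the hub `none` is
joined to every rim vertex, and rim vertex `i` is joined to rim vertex `i + 1`. -/
def wheelRel (n : ℕ) [NeZero n] : Option (Fin n) → Option (Fin n) → Prop := fun a b =>
  (a = none ∧ b ≠ none) ∨ (∃ i : Fin n, a = some i ∧ b = some (i + 1))

instance (n : ℕ) [NeZero n] : ∀ a b, Decidable (wheelRel n a b) := fun a b => by
  unfold wheelRel; infer_instance

/-- The wheel graph `W_{n+1} = C_n + K_1` on the vertex set `Option (Fin n)`,
with hub `none`. -/
def wheel (n : ℕ) [NeZero n] : SimpleGraph (Option (Fin n)) :=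
  SimpleGraph.fromRel (wheelRel n)

instance (n : ℕ) [NeZero n] : DecidableRel (wheel n).Adj := fun a b =>
  decidable_of_iff' _ (SimpleGraph.fromRel_adj (wheelRel n) a b)

/-! ### Auxiliary lemmas -/

open SimpleGraph in
/-- Degree of an edge in the line graph. -/
lemma lineGraph_degree_aux {V : Type*} (G : SimpleGraph V) [Fintype V] [DecidableEq V]
    [DecidableRel G.Adj] {u v : V} (h : G.Adj u v) (he : s(u, v) ∈ G.edgeSet) :
    G.lineGraph.degree ⟨s(u, v), he⟩ = G.degree u + G.degree v - 2 := by
  classical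
  have key : G.lineGraph.neighborFinset ⟨s(u, v), he⟩ =
      ((G.incidenceFinset u ∪ G.incidenceFinset v).erase s(u, v)).subtype
        (· ∈ G.edgeSet) := by
    ext ⟨e, hee⟩
    simp only [mem_neighborFinset, lineGraph_adj_iff_exists, Finset.mem_subtype,
      Finset.mem_erase, Finset.mem_union, mem_incidenceFinset, ne_eq, Subtype.mk.injEq,
      SimpleGraph.incidenceSet, Set.mem_setOf_eq, Sym2.mem_iff, hee, true_and]
    constructor
    · rintro ⟨hne, w, (rfl | rfl), hw⟩ <;>
        exact ⟨fun hq => hne hq.symm, by tauto⟩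
    · rintro ⟨hne, hmem⟩
      refine ⟨fun hq => hne hq.symm, ?_⟩
      rcases hmem with hu | hv
      · exact ⟨u, Or.inl rfl, hu⟩
      · exact ⟨v, Or.inr rfl, hv⟩
  have hinter : G.incidenceFinset u ∩ G.incidenceFinset v = {s(u, v)} := by
    have h2 := G.incidenceSet_inter_incidenceSet_of_adj h
    rw [Set.ext_iff] at h2
    ext e
    have := h2 e
    simp only [Set.mem_inter_iff, Set.mem_singleton_iff] at this
    simp [Finset.mem_inter, mem_incidenceFinset, this]
  have hmem : s(u, v) ∈ G.incidenceFinset u ∪ G.incidenceFinset v := by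
    simp [mem_incidenceFinset, G.mk'_mem_incidenceSet_left_iff.2 h]
  have hc := Finset.card_union_add_card_inter (G.incidenceFinset u) (G.incidenceFinset v)
  rw [hinter, card_incidenceFinset_eq_degree, card_incidenceFinset_eq_degree,
    Finset.card_singleton] at hc
  rw [← card_neighborFinset_eq_degree, key, Finset.card_subtype,
    Finset.filter_true_of_mem, Finset.card_erase_of_mem hmem]
  · omega
  · intro e hee
    simp only [Finset.mem_erase, Finset.mem_union, mem_incidenceFinset] at hee
    exact hee.2.elim (fun q => G.incidenceSet_subset u q) (fun q => G.incidenceSet_subset v q)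

section WheelAux
variable {n : ℕ} [NeZero n]

lemma wheel_adj {a b : Option (Fin n)} : (wheel n).Adj a b ↔ a ≠ b ∧
    (wheelRel n a b ∨ wheelRel n b a) := SimpleGraph.fromRel_adj _ a b

lemma fin_one_val (hn : 5 ≤ n) : ((1 : Fin n)).val = 1 := by
  rw [Fin.val_one']; exact Nat.mod_eq_of_lt (by omega)

lemma fin_val_add_one (hn : 5 ≤ n) (i : Fin n) :
    ((i + 1 : Fin n)).val = if i.val + 1 = n then 0 else i.val + 1 := by
  rw [Fin.val_add, fin_one_val hn]
  have hi : i.val < n := i.isLt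
  rcases Nat.lt_or_ge (i.val + 1) n with hl | hg
  · rw [Nat.mod_eq_of_lt hl, if_neg (by omega)]
  · have he : i.val + 1 = n := by omega
    rw [he, Nat.mod_self, if_pos rfl]

lemma fin_add_one_ne (hn : 5 ≤ n) (i : Fin n) : i + 1 ≠ i := by
  intro h
  have h2 := congrArg Fin.val h
  rw [fin_val_add_one hn] at h2
  have hi : i.val < n := i.isLt
  split at h2 <;> omega

lemma fin_no_two_cycle (hn : 5 ≤ n) {i j : Fin n} (h1 : j = i + 1) (h2 : i = j + 1) : False := by
  subst h1
  have h3 : i + 1 + 1 = i := by rw [← h2]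
  have h4 := congrArg Fin.val h3
  rw [fin_val_add_one hn, fin_val_add_one hn] at h4
  have hi : i.val < n := i.isLt
  split at h4 <;> split at h4 <;> omega

lemma spoke_adj (i : Fin n) : (wheel n).Adj none (some i) := by
  rw [wheel_adj]
  exact ⟨by simp, Or.inl (Or.inl ⟨rfl, by simp⟩)⟩

lemma rim_adj (hn : 5 ≤ n) (i : Fin n) : (wheel n).Adj (some i) (some (i + 1)) := by
  rw [wheel_adj]
  refine ⟨?_, Or.inl (Or.inr ⟨i, rfl, rfl⟩)⟩
  simp only [ne_eq, Option.some.injEq]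
  exact fun h => fin_add_one_ne hn i h.symm

lemma wheel_adj_none {b : Option (Fin n)} : (wheel n).Adj none b ↔ b ≠ none := by
  rw [wheel_adj]
  unfold wheelRel
  constructor
  · rintro ⟨h1, -⟩; exact fun hb => h1 hb.symm
  · intro hb; exact ⟨fun h => hb h.symm, Or.inl (Or.inl ⟨rfl, hb⟩)⟩

lemma wheel_adj_some (hn : 5 ≤ n) {i : Fin n} {b : Option (Fin n)} :
    (wheel n).Adj (some i) b ↔ b = none ∨ b = some (i + 1) ∨ b = some (i - 1) := by
  rw [wheel_adj]
  unfold wheelRel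
  constructor
  · rintro ⟨hne, (⟨h, -⟩ | ⟨j, hj, hb⟩) | (⟨h, -⟩ | ⟨j, hj, hb⟩)⟩
    · exact absurd h (by simp)
    · obtain rfl : j = i := by simpa using hj.symm
      exact Or.inr (Or.inl hb)
    · exact Or.inl h
    · obtain rfl : i = j + 1 := by simpa using hb
      refine Or.inr (Or.inr ?_)
      rw [hj, add_sub_cancel_right]
  · rintro (rfl | rfl | rfl)
    · exact ⟨by simp, Or.inr (Or.inl ⟨rfl, by simp⟩)⟩
    · refine ⟨?_, Or.inl (Or.inr ⟨i, rfl, rfl⟩)⟩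
      simp only [ne_eq, Option.some.injEq]
      exact fun h => fin_add_one_ne hn i h.symm
    · refine ⟨?_, Or.inr (Or.inr ⟨i - 1, rfl, by rw [sub_add_cancel]⟩)⟩
      simp only [ne_eq, Option.some.injEq]
      intro h
      rw [eq_sub_iff_add_eq] at h
      exact fin_add_one_ne hn i h

lemma wheel_degree_none (hn : 5 ≤ n) : (wheel n).degree none = n := by
  have hns : (wheel n).neighborFinset none = Finset.univ.erase none := by
    ext b
    simp [SimpleGraph.mem_neighborFinset, wheel_adj_none]
  rw [← SimpleGraph.card_neighborFinset_eq_degree, hns,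
    Finset.card_erase_of_mem (Finset.mem_univ _), Finset.card_univ, Fintype.card_option,
    Fintype.card_fin]
  omega

lemma wheel_degree_some (hn : 5 ≤ n) (i : Fin n) : (wheel n).degree (some i) = 3 := by
  have hns : (wheel n).neighborFinset (some i) =
      {none, some (i + 1), some (i - 1)} := by
    ext b
    simp [SimpleGraph.mem_neighborFinset, wheel_adj_some hn]
  have h1 : (some (i + 1) : Option (Fin n)) ∉
      ({some (i - 1)} : Finset (Option (Fin n))) := by
    simp only [Finset.mem_singleton, Option.some.injEq]
    intro h
    rw [eq_sub_iff_add_eq] at h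
    exact fin_no_two_cycle hn rfl h.symm
  have h2 : (none : Option (Fin n)) ∉
      ({some (i + 1), some (i - 1)} : Finset (Option (Fin n))) := by simp
  rw [← SimpleGraph.card_neighborFinset_eq_degree, hns,
    Finset.card_insert_of_notMem h2, Finset.card_insert_of_notMem h1,
    Finset.card_singleton]

lemma wheel_edge (hn : 5 ≤ n) {e : Sym2 (Option (Fin n))} (he : e ∈ (wheel n).edgeSet) :
    (∃ i, e = s((none : Option (Fin n)), some i)) ∨ (∃ i, e = s(some i, some (i + 1))) := by
  induction e using Sym2.ind with
  | _ a b =>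
    rw [SimpleGraph.mem_edgeSet] at he
    match a, b with
    | none, none => exact absurd rfl he.ne
    | none, some j => exact Or.inl ⟨j, rfl⟩
    | some j, none => exact Or.inl ⟨j, Sym2.eq_swap⟩
    | some j, some k =>
      rw [wheel_adj_some hn] at he
      rcases he with h | h | h
      · exact absurd h (by simp)
      · obtain rfl : k = j + 1 := by simpa using h
        exact Or.inr ⟨j, rfl⟩
      · obtain rfl : k = j - 1 := by simpa using h
        exact Or.inr ⟨j - 1, by rw [sub_add_cancel, Sym2.eq_swap]⟩

end WheelAux

set_option maxHeartbeats 1000000 in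
/-- In the line graph of the wheel `W_{n+1}` (`n ≥ 5`): the `n` spoke edges form a
clique and each has degree `n + 1`; each of the `n` rim edges has degree `4`;
consequently `cn(L(W_{n+1})) = n` and `cn^c(L(W_{n+1})) = n ^ 2`. -/
theorem wheel_lineGraph_curling (n : ℕ) [NeZero n] (hn : 5 ≤ n) :
    (∀ (i j : Fin n) (hi : s((none : Option (Fin n)), some i) ∈ (wheel n).edgeSet)
        (hj : s((none : Option (Fin n)), some j) ∈ (wheel n).edgeSet), i ≠ j →
        (wheel n).lineGraph.Adj ⟨s(none, some i), hi⟩ ⟨s(none, some j), hj⟩) ∧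
    (∀ (i : Fin n) (hi : s((none : Option (Fin n)), some i) ∈ (wheel n).edgeSet),
        (wheel n).lineGraph.degree ⟨s(none, some i), hi⟩ = n + 1) ∧
    (∀ (i : Fin n) (he : s(some i, some (i + 1)) ∈ (wheel n).edgeSet),
        (wheel n).lineGraph.degree ⟨s(some i, some (i + 1)), he⟩ = 4) ∧
    graphCn (wheel n).lineGraph = n ∧ graphCnc (wheel n).lineGraph = n ^ 2 := by
  have hSpokeDeg : ∀ (i : Fin n) (hi : s((none : Option (Fin n)), some i) ∈ (wheel n).edgeSet),
      (wheel n).lineGraph.degree ⟨s(none, some i), hi⟩ = n + 1 := by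
    intro i hi
    rw [lineGraph_degree_aux (wheel n) (spoke_adj i) hi, wheel_degree_none hn,
      wheel_degree_some hn]
    omega
  have hRimDeg : ∀ (i : Fin n) (he : s(some i, some (i + 1)) ∈ (wheel n).edgeSet),
      (wheel n).lineGraph.degree ⟨s(some i, some (i + 1)), he⟩ = 4 := by
    intro i he
    rw [lineGraph_degree_aux (wheel n) (rim_adj hn i) he, wheel_degree_some hn,
      wheel_degree_some hn]
  refine ⟨?_, hSpokeDeg, hRimDeg, ?_, ?_⟩
  · intro i j hi hj hij
    rw [SimpleGraph.lineGraph_adj_iff_exists]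
    refine ⟨?_, none, by simp, by simp⟩
    intro h
    rw [Subtype.mk.injEq, Sym2.eq_iff] at h
    rcases h with ⟨-, h⟩ | ⟨h, -⟩
    · exact hij (by simpa using h)
    · simp at h
  all_goals {
    have hdegMultSpoke : degMult (wheel n).lineGraph (n + 1) = n := by
      have hset : (Finset.univ.filter fun e : (wheel n).edgeSet =>
          (wheel n).lineGraph.degree e = n + 1) =
          Finset.univ.image (fun i : Fin n =>
            (⟨s(none, some i), (SimpleGraph.mem_edgeSet _).2 (spoke_adj i)⟩ : (wheel n).edgeSet)) := by
        ext ⟨e, he⟩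
        simp only [Finset.mem_filter, Finset.mem_univ, true_and, Finset.mem_image,
          Subtype.mk.injEq]
        rcases wheel_edge hn he with ⟨i, rfl⟩ | ⟨i, rfl⟩
        · simp only [hSpokeDeg i he, true_iff]
          exact ⟨i, rfl⟩
        · rw [hRimDeg i he]
          constructor
          · omega
          · rintro ⟨j, hj⟩
            rw [Sym2.eq_iff] at hj
            simp at hj
      unfold degMult
      rw [hset, Finset.card_image_of_injective _ ?_, Finset.card_univ,
        Fintype.card_fin]
      intro i j h
      rw [Subtype.mk.injEq, Sym2.eq_iff] at h
      rcases h with ⟨-, h⟩ | ⟨h, -⟩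
      · simpa using h
      · simp at h
    have hdegMultRim : degMult (wheel n).lineGraph 4 = n := by
      have hset : (Finset.univ.filter fun e : (wheel n).edgeSet =>
          (wheel n).lineGraph.degree e = 4) =
          Finset.univ.image (fun i : Fin n =>
            (⟨s(some i, some (i + 1)), (SimpleGraph.mem_edgeSet _).2 (rim_adj hn i)⟩ : (wheel n).edgeSet)) := by
        ext ⟨e, he⟩
        simp only [Finset.mem_filter, Finset.mem_univ, true_and, Finset.mem_image,
          Subtype.mk.injEq]
        rcases wheel_edge hn he with ⟨i, rfl⟩ | ⟨i, rfl⟩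
        · rw [hSpokeDeg i he]
          constructor
          · omega
          · rintro ⟨j, hj⟩
            rw [Sym2.eq_iff] at hj
            simp at hj
        · simp only [hRimDeg i he, true_iff]
          exact ⟨i, rfl⟩
      unfold degMult
      rw [hset, Finset.card_image_of_injective _ ?_, Finset.card_univ,
        Fintype.card_fin]
      intro i j h
      rw [Subtype.mk.injEq, Sym2.eq_iff] at h
      simp only [Option.some.injEq] at h
      rcases h with ⟨h, -⟩ | ⟨h1, h2⟩
      · exact h
      · exact absurd h1 (fun q => fin_no_two_cycle hn h2.symm q)
    have himg : Finset.univ.image (fun e : (wheel n).edgeSet =>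
        (wheel n).lineGraph.degree e) = {n + 1, 4} := by
      ext d
      simp only [Finset.mem_image, Finset.mem_univ, true_and, Finset.mem_insert,
        Finset.mem_singleton]
      constructor
      · rintro ⟨⟨e, he⟩, rfl⟩
        rcases wheel_edge hn he with ⟨i, rfl⟩ | ⟨i, rfl⟩
        · exact Or.inl (hSpokeDeg i he)
        · exact Or.inr (hRimDeg i he)
      · rintro (rfl | rfl)
        · exact ⟨⟨s(none, some 0), spoke_adj 0⟩, hSpokeDeg 0 _⟩
        · exact ⟨⟨s(some 0, some (0 + 1)), rim_adj hn 0⟩, hRimDeg 0 _⟩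
    first
    | (unfold graphCn
       rw [himg, Finset.sup_insert, Finset.sup_singleton, hdegMultSpoke, hdegMultRim]
       simp)
    | (unfold graphCnc
       rw [himg, Finset.prod_insert (by simp; omega), Finset.prod_singleton,
        hdegMultSpoke, hdegMultRim, sq])
  }
end

section
/- If G is a connected finite simple graph that is not a tree (i.e., |E| ≥ |V|), then the curling number of the subdivision G' of G equals ε + r, where ε = |E(G)| and r is the number of vertices of degree 2 in G. -/
open Finset

variable {V : Type*} [Fintype V] [DecidableEq V]

/-- Generating relation of the subdivision: each original vertex `u` is joined to the
new vertex corresponding to each edge `e` containing `u`. -/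
def subdivRel (G : SimpleGraph V) [DecidableRel G.Adj] :
    V ⊕ G.edgeSet → V ⊕ G.edgeSet → Prop := fun a b =>
  ∃ (u : V) (e : G.edgeSet), a = Sum.inl u ∧ b = Sum.inr e ∧ u ∈ (e : Sym2 V)

instance (G : SimpleGraph V) [DecidableRel G.Adj] : ∀ a b, Decidable (subdivRel G a b) :=
  fun a b => by unfold subdivRel; infer_instance

/-- The subdivision of `G`: every edge `uv` is replaced by a path of length two
through a new vertex. -/
def subdiv (G : SimpleGraph V) [DecidableRel G.Adj] : SimpleGraph (V ⊕ G.edgeSet) :=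
  SimpleGraph.fromRel (subdivRel G)

instance (G : SimpleGraph V) [DecidableRel G.Adj] : DecidableRel (subdiv G).Adj :=
  fun a b => decidable_of_iff' _ (SimpleGraph.fromRel_adj (subdivRel G) a b)

set_option linter.unusedSectionVars false

lemma adj_inl_inr (G : SimpleGraph V) [DecidableRel G.Adj] (u : V) (e : G.edgeSet) :
    (subdiv G).Adj (Sum.inl u) (Sum.inr e) ↔ u ∈ (e : Sym2 V) := by
  simp [subdiv, SimpleGraph.fromRel_adj, subdivRel]

lemma adj_inr_inl (G : SimpleGraph V) [DecidableRel G.Adj] (u : V) (e : G.edgeSet) :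
    (subdiv G).Adj (Sum.inr e) (Sum.inl u) ↔ u ∈ (e : Sym2 V) := by
  rw [SimpleGraph.adj_comm]; exact adj_inl_inr G u e

lemma adj_inl_inl (G : SimpleGraph V) [DecidableRel G.Adj] (u v : V) :
    ¬ (subdiv G).Adj (Sum.inl u) (Sum.inl v) := by
  simp [subdiv, SimpleGraph.fromRel_adj, subdivRel]

lemma adj_inr_inr (G : SimpleGraph V) [DecidableRel G.Adj] (e f : G.edgeSet) :
    ¬ (subdiv G).Adj (Sum.inr e) (Sum.inr f) := by
  simp [subdiv, SimpleGraph.fromRel_adj, subdivRel]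

lemma deg_inl (G : SimpleGraph V) [DecidableRel G.Adj] (u : V) :
    (subdiv G).degree (Sum.inl u) = G.degree u := by
  rw [← G.card_incidenceFinset_eq_degree u]
  rw [← SimpleGraph.card_neighborFinset_eq_degree]
  apply Finset.card_bij (fun a _ => match a with
    | Sum.inl v => s(u, v)  -- impossible case, junk
    | Sum.inr e => (e : Sym2 V))
  · rintro (v | e) ha
    · exact absurd ((SimpleGraph.mem_neighborFinset _ _ _).1 ha) (adj_inl_inl G u v)
    · have := (SimpleGraph.mem_neighborFinset _ _ _).1 ha
      rw [adj_inl_inr] at this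
      simp [SimpleGraph.mem_incidenceFinset, SimpleGraph.incidenceSet, e.2, this]
  · rintro (v | e) ha (w | f) hb h
    · exact absurd ((SimpleGraph.mem_neighborFinset _ _ _).1 ha) (adj_inl_inl G u v)
    · exact absurd ((SimpleGraph.mem_neighborFinset _ _ _).1 ha) (adj_inl_inl G u v)
    · exact absurd ((SimpleGraph.mem_neighborFinset _ _ _).1 hb) (adj_inl_inl G u w)
    · simp only [Sum.inr.injEq]; exact Subtype.ext h
  · intro e he
    rw [SimpleGraph.mem_incidenceFinset] at he
    exact ⟨Sum.inr ⟨e, he.1⟩, by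
      rw [SimpleGraph.mem_neighborFinset, adj_inl_inr]; exact he.2, rfl⟩

lemma deg_inr (G : SimpleGraph V) [DecidableRel G.Adj] (e : G.edgeSet) :
    (subdiv G).degree (Sum.inr e) = 2 := by
  obtain ⟨⟨a, b⟩, he⟩ := e
  have hab : G.Adj a b := (SimpleGraph.mem_edgeSet G).1 he
  rw [← SimpleGraph.card_neighborFinset_eq_degree]
  have : (subdiv G).neighborFinset (Sum.inr ⟨s(a,b), he⟩) = {Sum.inl a, Sum.inl b} := by
    ext (v | f)
    · rw [SimpleGraph.mem_neighborFinset, adj_inr_inl]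
      simp [Sym2.mem_iff, eq_comm]
    · simp only [SimpleGraph.mem_neighborFinset]
      simp [adj_inr_inr]
  rw [this, Finset.card_insert_of_notMem (by simp [hab.ne]), Finset.card_singleton]

lemma split_card (G : SimpleGraph V) [DecidableRel G.Adj] (d : ℕ) :
    degMult (subdiv G) d =
      (univ.filter fun v : V => G.degree v = d).card
      + (if d = 2 then Fintype.card G.edgeSet else 0) := by
  unfold degMult
  rw [← Finset.card_toLeft_add_card_toRight]
  congr 1
  · congr 1; ext v; simp [deg_inl]
  · split_ifs with h
    · subst h; rw [← Finset.card_univ]; congr 1; ext e; simp [deg_inr]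
    · rw [Finset.card_eq_zero]; ext e; simp [deg_inr, Ne.symm h]


/-- If `G` is connected and not a tree (`|E| ≥ |V|`), then the curling number of the
subdivision `G'` of `G` equals `ε + r`, where `ε` is the number of edges of `G` and
`r` is the number of vertices of degree `2` in `G`. -/
theorem graphCn_subdiv (G : SimpleGraph V) [DecidableRel G.Adj] (hconn : G.Connected)
    (hnt : Fintype.card V ≤ G.edgeFinset.card) :
    graphCn (subdiv G) =
      G.edgeFinset.card + (Finset.univ.filter fun v : V => G.degree v = 2).card := by
  have hcard : Fintype.card G.edgeSet = G.edgeFinset.card := (Set.toFinset_card _).symm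
  have h2 : degMult (subdiv G) 2 =
      G.edgeFinset.card + (univ.filter fun v : V => G.degree v = 2).card := by
    rw [split_card, if_pos rfl, hcard, add_comm]
  -- nonempty edge set
  have hV : 0 < Fintype.card V := Fintype.card_pos_iff.2 hconn.nonempty
  have hE : G.edgeFinset.Nonempty := Finset.card_pos.1 (lt_of_lt_of_le hV hnt)
  obtain ⟨e, he⟩ := hE
  have heS : e ∈ G.edgeSet := SimpleGraph.mem_edgeFinset.1 he
  apply le_antisymm
  · apply Finset.sup_le
    intro d hd
    rw [split_card]
    by_cases h : d = 2
    · subst h; rw [← split_card, h2]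
    · rw [if_neg h, add_zero]
      calc (univ.filter fun v : V => G.degree v = d).card
          ≤ Fintype.card V := by
            rw [← Finset.card_univ]; exact Finset.card_filter_le _ _
        _ ≤ G.edgeFinset.card := hnt
        _ ≤ _ := Nat.le_add_right _ _
  · rw [← h2]
    apply Finset.le_sup
    simp only [Finset.mem_image]
    exact ⟨Sum.inr ⟨e, heS⟩, Finset.mem_univ _, deg_inr G _⟩
end
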